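/- Let X be a separable Fréchet space (or Banach space) and (T_n)_{n≥1} a sequence of continuous linear operators on X. Suppose there are subsets A, B of X whose linear spans are dense, such that every a ∈ A is an eigenvector of each T_n with eigenvalues λ(T_n, a) satisfying |λ(T_n, a)| → 0, and every b ∈ B is an eigenvector of each T_n with |λ(T_n, b)| → ∞ as n → ∞. Then (T_n) is topologically mixing: for all nonempty open sets U, V there is N such that T_n(U) ∩ V ≠ ∅ for all n ≥ N. -/

import Mathlib

open Filter

/-- Eigenvalue criterion for topological mixing: if the spans of `A` and `B` are dense,
every element of `A` is a common eigenvector with eigenvalues tending to `0`, and every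
element of `B` is a common eigenvector with eigenvalues tending to `∞` in modulus, then
the sequence `(T n)` is topologically mixing. -/
theorem stmt10 {X : Type*} [NormedAddCommGroup X] [NormedSpace ℂ X] [CompleteSpace X]
    [TopologicalSpace.SeparableSpace X]
    (T : ℕ → X →L[ℂ] X) (A B : Set X) (lam : X → ℕ → ℂ)
    (hAdense : Dense (Submodule.span ℂ A : Set X))
    (hBdense : Dense (Submodule.span ℂ B : Set X))
    (hA : ∀ a ∈ A, a ≠ 0 ∧ (∀ n, T n a = lam a n • a) ∧
      Tendsto (fun n => ‖lam a n‖) atTop (nhds 0))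
    (hB : ∀ b ∈ B, b ≠ 0 ∧ (∀ n, T n b = lam b n • b) ∧
      Tendsto (fun n => ‖lam b n‖) atTop atTop) :
    ∀ U V : Set X, IsOpen U → IsOpen V → U.Nonempty → V.Nonempty →
      ∃ N : ℕ, ∀ n ≥ N, ((T n) '' U ∩ V).Nonempty := by
  -- Step 1: for x in span A, T n x → 0.
  have keyA : ∀ x ∈ Submodule.span ℂ A, Tendsto (fun n => T n x) atTop (nhds 0) := by
    intro x hx
    induction hx using Submodule.span_induction with
    | mem a ha =>
      obtain ⟨-, heig, hlim⟩ := hA a ha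
      have h0 : Tendsto (fun n => lam a n) atTop (nhds 0) :=
        tendsto_zero_iff_norm_tendsto_zero.2 hlim
      have := h0.smul_const a
      simpa [heig] using this
    | zero => simp
    | add x y hx hy ihx ihy => simpa using ihx.add ihy
    | smul c x hx ih => simpa using ih.const_smul c
  -- Step 2: for y in span B, there is z n → 0 with T n (z n) = y eventually.
  have keyB : ∀ y ∈ Submodule.span ℂ B, ∃ z : ℕ → X,
      Tendsto z atTop (nhds 0) ∧ ∀ᶠ n in atTop, T n (z n) = y := by
    intro y hy
    induction hy using Submodule.span_induction with
    | mem b hb =>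
      obtain ⟨-, heig, hlim⟩ := hB b hb
      refine ⟨fun n => (lam b n)⁻¹ • b, ?_, ?_⟩
      · have h1 : Tendsto (fun n => ‖(lam b n)⁻¹‖) atTop (nhds 0) := by
          rw [show (fun n => ‖(lam b n)⁻¹‖) = fun n => ‖lam b n‖⁻¹ from funext fun n => norm_inv _]; exact hlim.inv_tendsto_atTop
        have h2 : Tendsto (fun n => (lam b n)⁻¹) atTop (nhds 0) :=
          tendsto_zero_iff_norm_tendsto_zero.2 h1
        simpa using h2.smul_const b
      · filter_upwards [hlim.eventually_gt_atTop 0] with n hn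
        have hne : lam b n ≠ 0 := by
          intro h; simp [h] at hn
        rw [map_smul, heig, smul_smul, inv_mul_cancel₀ hne, one_smul]
    | zero => exact ⟨fun _ => 0, tendsto_const_nhds, by simp⟩
    | add x y _ _ ihx ihy =>
      obtain ⟨z1, hz1, he1⟩ := ihx
      obtain ⟨z2, hz2, he2⟩ := ihy
      refine ⟨fun n => z1 n + z2 n, by simpa using hz1.add hz2, ?_⟩
      filter_upwards [he1, he2] with n h1 h2
      simp [map_add, h1, h2]
    | smul c x _ ih =>
      obtain ⟨z, hz, he⟩ := ih
      refine ⟨fun n => c • z n, by simpa using hz.const_smul c, ?_⟩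
      filter_upwards [he] with n h
      simp [map_smul, h]
  intro U V hU hV hUne hVne
  obtain ⟨x, hxA, hxU⟩ := hAdense.exists_mem_open hU hUne
  obtain ⟨y, hyB, hyV⟩ := hBdense.exists_mem_open hV hVne
  obtain ⟨z, hz0, hzy⟩ := keyB y hyB
  have hw : Tendsto (fun n => x + z n) atTop (nhds x) := by
    simpa using (tendsto_const_nhds.add hz0 : Tendsto (fun n => x + z n) atTop (nhds (x + 0)))
  have hwU : ∀ᶠ n in atTop, x + z n ∈ U := hw.eventually (hU.eventually_mem hxU)
  have hTx : Tendsto (fun n => T n x) atTop (nhds 0) := keyA x hxA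
  have hTw : ∀ᶠ n in atTop, T n (x + z n) = T n x + y := by
    filter_upwards [hzy] with n h
    simp [map_add, h]
  have hTwV : ∀ᶠ n in atTop, T n (x + z n) ∈ V := by
    have hlim : Tendsto (fun n => T n x + y) atTop (nhds y) := by
      simpa using (hTx.add tendsto_const_nhds : Tendsto (fun n => T n x + y) atTop (nhds (0 + y)))
    have := hlim.eventually (hV.eventually_mem hyV)
    filter_upwards [this, hTw] with n h1 h2
    rw [h2]; exact h1
  obtain ⟨N, hN⟩ := (hwU.and hTwV).exists_forall_of_atTop
  exact ⟨N, fun n hn => ⟨T n (x + z n), ⟨x + z n, (hN n hn).1, rfl⟩, (hN n hn).2⟩⟩
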